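/- Every set of 6 points in the plane in general position, colored with 2 colors, contains a monochromatic triangle with at most 1 point of the set in its interior. -/

import Mathlib

open scoped Classical

noncomputable section

/-- A planar point set is in general position if no three distinct points are collinear. -/
def GenPos (S : Set (ℝ × ℝ)) : Prop :=
  ∀ p ∈ S, ∀ q ∈ S, ∀ r ∈ S, p ≠ q → p ≠ r → q ≠ r →
    ¬ Collinear ℝ ({p, q, r} : Set (ℝ × ℝ))

/-- Number of points of `S` strictly inside the triangle `a b c`. -/
def triPts (S : Finset (ℝ × ℝ)) (a b c : ℝ × ℝ) : ℕ :=
  (S.filter (fun p => p ∈ interior (convexHull ℝ ({a, b, c} : Set (ℝ × ℝ))))).card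

/-- `S` (colored by `χ`) contains a monochromatic triangle with at most `s` interior points. -/
def MonoTriangle {c : ℕ} (S : Finset (ℝ × ℝ)) (χ : ℝ × ℝ → Fin c) (s : ℕ) : Prop :=
  ∃ a ∈ S, ∃ b ∈ S, ∃ d ∈ S, a ≠ b ∧ a ≠ d ∧ b ≠ d ∧
    χ a = χ b ∧ χ b = χ d ∧ triPts S a b d ≤ s

abbrev Pt := ℝ × ℝ

lemma tri_indep {a b c : Pt} (h : ¬ Collinear ℝ ({a,b,c} : Set Pt)) :
    AffineIndependent ℝ ![a, b, c] :=
  affineIndependent_iff_not_collinear_set.2 h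

def triBasis (a b c : Pt) (h : ¬ Collinear ℝ ({a,b,c} : Set Pt)) :
    AffineBasis (Fin 3) ℝ Pt :=
  ⟨![a,b,c], tri_indep h, by
    rw [(tri_indep h).affineSpan_eq_top_iff_card_eq_finrank_add_one]
    simp⟩

lemma triBasis_range {a b c : Pt} (h : ¬ Collinear ℝ ({a,b,c} : Set Pt)) :
    Set.range (triBasis a b c h) = ({a,b,c} : Set Pt) := by
  show Set.range ![a,b,c] = _
  simp [Matrix.range_cons, Matrix.range_empty]
  ext x; simp; tauto

lemma mem_int_iff {a b c : Pt} (h : ¬ Collinear ℝ ({a,b,c} : Set Pt)) (x : Pt) :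
    x ∈ interior (convexHull ℝ ({a,b,c} : Set Pt)) ↔
      ∀ i, 0 < (triBasis a b c h).coord i x := by
  rw [← triBasis_range h, AffineBasis.interior_convexHull]
  rfl

lemma coord_comb (B : AffineBasis (Fin 3) ℝ Pt) (w : Fin 3 → ℝ) (hw : ∑ j, w j = 1)
    (y : Fin 3 → Pt) (i : Fin 3) :
    B.coord i (∑ j, w j • y j) = ∑ j, w j * B.coord i (y j) := by
  have h1 := Finset.univ.affineCombination_eq_linear_combination y w hw
  have h2 := Finset.univ.map_affineCombination y w hw (B.coord i)
  have h3 := Finset.univ.affineCombination_eq_linear_combination (fun j => B.coord i (y j)) w hw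
  rw [h1] at h2
  rw [h2]
  show Finset.univ.affineCombination ℝ (fun j => B.coord i (y j)) w = _
  rw [h3]
  simp [smul_eq_mul]

lemma triBasis_coord_pt {a b c : Pt} (h : ¬ Collinear ℝ ({a,b,c} : Set Pt)) (i j : Fin 3) :
    (triBasis a b c h).coord i (![a,b,c] j) = if i = j then 1 else 0 :=
  (triBasis a b c h).coord_apply i j

lemma tri_rep {a b c : Pt} (h : ¬ Collinear ℝ ({a,b,c} : Set Pt)) (x : Pt) :
    ((triBasis a b c h).coord 0 x) • a + ((triBasis a b c h).coord 1 x) • b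
      + ((triBasis a b c h).coord 2 x) • c = x := by
  have := (triBasis a b c h).linear_combination_coord_eq_self x
  rw [Fin.sum_univ_three] at this
  convert this using 3 <;> rfl

lemma tri_coord_sum {a b c : Pt} (h : ¬ Collinear ℝ ({a,b,c} : Set Pt)) (x : Pt) :
    (triBasis a b c h).coord 0 x + (triBasis a b c h).coord 1 x
      + (triBasis a b c h).coord 2 x = 1 := by
  have := (triBasis a b c h).sum_coord_apply_eq_one x
  rwa [Fin.sum_univ_three] at this

lemma coord_comb3 (B : AffineBasis (Fin 3) ℝ Pt) {w0 w1 w2 : ℝ} (hw : w0 + w1 + w2 = 1)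
    (y0 y1 y2 : Pt) (i : Fin 3) :
    B.coord i (w0 • y0 + w1 • y1 + w2 • y2)
      = w0 * B.coord i y0 + w1 * B.coord i y1 + w2 * B.coord i y2 := by
  have := coord_comb B ![w0,w1,w2] (by rw [Fin.sum_univ_three]; simpa) ![y0,y1,y2] i
  rw [Fin.sum_univ_three, Fin.sum_univ_three] at this
  simpa using this

lemma coord_zero_collinear {a b c : Pt} (h : ¬ Collinear ℝ ({a,b,c} : Set Pt)) {x : Pt}
    (hx : (triBasis a b c h).coord 2 x = 0) : Collinear ℝ ({a, b, x} : Set Pt) := by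
  have hrep := tri_rep h x
  rw [hx, zero_smul, add_zero] at hrep
  have hsum := tri_coord_sum h x
  rw [hx, add_zero] at hsum
  rw [collinear_iff_of_mem (Set.mem_insert a {b, x})]
  refine ⟨b - a, fun p hp => ?_⟩
  rcases hp with rfl | rfl | rfl
  · exact ⟨0, by simp⟩
  · exact ⟨1, by simp⟩
  · set r := (triBasis a b c h).coord 1 p with hr
    have h1 : (triBasis a b c h).coord 0 p = 1 - r := by linarith
    rw [h1] at hrep
    refine ⟨r, ?_⟩
    rw [← hrep]
    simp only [vadd_eq_add, smul_sub, sub_smul, one_smul]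
    abel

lemma coord_zero_collinear0 {a b c : Pt} (h : ¬ Collinear ℝ ({a,b,c} : Set Pt)) {x : Pt}
    (hx : (triBasis a b c h).coord 0 x = 0) : Collinear ℝ ({b, c, x} : Set Pt) := by
  have hrep := tri_rep h x
  rw [hx, zero_smul, zero_add] at hrep
  have hsum := tri_coord_sum h x
  rw [hx, zero_add] at hsum
  rw [collinear_iff_of_mem (Set.mem_insert b {c, x})]
  refine ⟨c - b, fun p hp => ?_⟩
  rcases hp with rfl | rfl | rfl
  · exact ⟨0, by simp⟩
  · exact ⟨1, by simp⟩
  · set r := (triBasis a b c h).coord 2 p with hr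
    have h1 : (triBasis a b c h).coord 1 p = 1 - r := by linarith
    rw [h1] at hrep
    refine ⟨r, ?_⟩
    rw [← hrep]
    simp only [vadd_eq_add, smul_sub, sub_smul, one_smul]
    abel

lemma coord_zero_collinear1 {a b c : Pt} (h : ¬ Collinear ℝ ({a,b,c} : Set Pt)) {x : Pt}
    (hx : (triBasis a b c h).coord 1 x = 0) : Collinear ℝ ({a, c, x} : Set Pt) := by
  have hrep := tri_rep h x
  rw [hx, zero_smul, add_zero] at hrep
  have hsum := tri_coord_sum h x
  rw [hx, add_zero] at hsum
  rw [collinear_iff_of_mem (Set.mem_insert a {c, x})]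
  refine ⟨c - a, fun p hp => ?_⟩
  rcases hp with rfl | rfl | rfl
  · exact ⟨0, by simp⟩
  · exact ⟨1, by simp⟩
  · set r := (triBasis a b c h).coord 2 p with hr
    have h1 : (triBasis a b c h).coord 0 p = 1 - r := by linarith
    rw [h1] at hrep
    refine ⟨r, ?_⟩
    rw [← hrep]
    simp only [vadd_eq_add, smul_sub, sub_smul, one_smul]
    abel

lemma coord_pt_a {a b c : Pt} (h : ¬ Collinear ℝ ({a,b,c} : Set Pt)) (i : Fin 3) :
    (triBasis a b c h).coord i a = if i = 0 then 1 else 0 := triBasis_coord_pt h i 0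

lemma coord_pt_b {a b c : Pt} (h : ¬ Collinear ℝ ({a,b,c} : Set Pt)) (i : Fin 3) :
    (triBasis a b c h).coord i b = if i = 1 then 1 else 0 := triBasis_coord_pt h i 1

lemma coord_pt_c {a b c : Pt} (h : ¬ Collinear ℝ ({a,b,c} : Set Pt)) (i : Fin 3) :
    (triBasis a b c h).coord i c = if i = 2 then 1 else 0 := triBasis_coord_pt h i 2

lemma tri_coord_unique {a b c : Pt} (h : ¬ Collinear ℝ ({a,b,c} : Set Pt))
    {w0 w1 w2 : ℝ} (hw : w0 + w1 + w2 = 1) {x : Pt} (hx : x = w0 • a + w1 • b + w2 • c)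
    (i : Fin 3) :
    (triBasis a b c h).coord i x = w0 * (if i = 0 then 1 else 0)
      + w1 * (if i = 1 then 1 else 0) + w2 * (if i = 2 then 1 else 0) := by
  rw [hx, coord_comb3 (triBasis a b c h) hw, coord_pt_a, coord_pt_b, coord_pt_c]

lemma vertex_not_mem_int {a b c : Pt} (h : ¬ Collinear ℝ ({a,b,c} : Set Pt)) :
    a ∉ interior (convexHull ℝ ({a,b,c} : Set Pt)) ∧
    b ∉ interior (convexHull ℝ ({a,b,c} : Set Pt)) ∧
    c ∉ interior (convexHull ℝ ({a,b,c} : Set Pt)) := by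
  refine ⟨fun hm => ?_, fun hm => ?_, fun hm => ?_⟩
  · have := (mem_int_iff h a).1 hm 1
    rw [coord_pt_a h 1, if_neg (by decide : (1:Fin 3) ≠ 0)] at this; exact lt_irrefl 0 this
  · have := (mem_int_iff h b).1 hm 0
    rw [coord_pt_b h 0, if_neg (by decide : (0:Fin 3) ≠ 1)] at this; exact lt_irrefl 0 this
  · have := (mem_int_iff h c).1 hm 0
    rw [coord_pt_c h 0, if_neg (by decide : (0:Fin 3) ≠ 2)] at this; exact lt_irrefl 0 this

/-- If `d` is strictly on the opposite side of line `ab` from `c`, the interiors of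
triangles `abc` and `abd` are disjoint. -/
lemma opp_disj {a b c d : Pt} (h : ¬ Collinear ℝ ({a,b,c} : Set Pt))
    (h' : ¬ Collinear ℝ ({a,b,d} : Set Pt))
    (hd : (triBasis a b c h).coord 2 d < 0) :
    ∀ x, x ∈ interior (convexHull ℝ ({a,b,d} : Set Pt)) →
      x ∉ interior (convexHull ℝ ({a,b,c} : Set Pt)) := by
  intro x hx hx'
  have hpos := (mem_int_iff h' x).1 hx
  have hrep := tri_rep h' x
  have hsum := tri_coord_sum h' x
  have h2 := coord_comb3 (triBasis a b c h) hsum a b d 2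
  rw [hrep, coord_pt_a, coord_pt_b] at h2
  rw [if_neg (by decide : (2:Fin 3) ≠ 0), if_neg (by decide : (2:Fin 3) ≠ 1)] at h2
  norm_num at h2
  have hx2 := (mem_int_iff h x).1 hx' 2
  have hw2 := hpos 2
  nlinarith

/-- Two triangles cannot each contain (at least) two vertices of the other strictly inside. -/
lemma mutual_containment {a b c p q r : Pt} (hA : ¬ Collinear ℝ ({a,b,c} : Set Pt))
    (hB : ¬ Collinear ℝ ({p,q,r} : Set Pt))
    (hp : p ∈ interior (convexHull ℝ ({a,b,c} : Set Pt)))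
    (hq : q ∈ interior (convexHull ℝ ({a,b,c} : Set Pt)))
    (ha : a ∈ interior (convexHull ℝ ({p,q,r} : Set Pt)))
    (hb : b ∈ interior (convexHull ℝ ({p,q,r} : Set Pt))) : False := by
  set BA := triBasis a b c hA with hBA
  set BB := triBasis p q r hB with hBB
  have hpc := (mem_int_iff hA p).1 hp
  have hqc := (mem_int_iff hA q).1 hq
  have hac := (mem_int_iff hB a).1 ha
  have hbc := (mem_int_iff hB b).1 hb
  have keyp : ∀ σ : Fin 3, BB.coord σ p = (BA.coord 0 p) * BB.coord σ a
      + (BA.coord 1 p) * BB.coord σ b + (BA.coord 2 p) * BB.coord σ c := by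
    intro σ
    have h0 := coord_comb3 BB (tri_coord_sum hA p) a b c σ
    rwa [tri_rep hA p] at h0
  have keyq : ∀ σ : Fin 3, BB.coord σ q = (BA.coord 0 q) * BB.coord σ a
      + (BA.coord 1 q) * BB.coord σ b + (BA.coord 2 q) * BB.coord σ c := by
    intro σ
    have h0 := coord_comb3 BB (tri_coord_sum hA q) a b c σ
    rwa [tri_rep hA q] at h0
  have hp1 : BB.coord 1 p = 0 := by
    rw [hBB, coord_pt_a hB 1, if_neg (by decide : (1:Fin 3) ≠ 0)]
  have hp2 : BB.coord 2 p = 0 := by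
    rw [hBB, coord_pt_a hB 2, if_neg (by decide : (2:Fin 3) ≠ 0)]
  have hq0 : BB.coord 0 q = 0 := by
    rw [hBB, coord_pt_b hB 0, if_neg (by decide : (0:Fin 3) ≠ 1)]
  have hx : BB.coord 0 c < 0 := by
    have := keyq 0; rw [hq0] at this
    nlinarith [hqc 0, hqc 1, hqc 2, hac 0, hbc 0]
  have hy : BB.coord 1 c < 0 := by
    have := keyp 1; rw [hp1] at this
    nlinarith [hpc 0, hpc 1, hpc 2, hac 1, hbc 1]
  have hz : BB.coord 2 c < 0 := by
    have := keyp 2; rw [hp2] at this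
    nlinarith [hpc 0, hpc 1, hpc 2, hac 2, hbc 2]
  have hsum := tri_coord_sum hB c
  linarith

lemma third_point {x y z u v : Pt} (hu : u ∈ ({x,y,z} : Set Pt)) (hv : v ∈ ({x,y,z} : Set Pt))
    (huv : u ≠ v) : ∃ w, ({x,y,z} : Set Pt) = {u,v,w} := by
  simp only [Set.mem_insert_iff, Set.mem_singleton_iff] at hu hv
  rcases hu with h1 | h1 | h1 <;> rcases hv with h2 | h2 | h2
  · exact absurd (h1.trans h2.symm) huv
  · exact ⟨z, by rw [h1, h2]⟩
  · exact ⟨y, by rw [h1, h2]; ext t; simp; tauto⟩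
  · exact ⟨z, by rw [h1, h2]; ext t; simp; tauto⟩
  · exact absurd (h1.trans h2.symm) huv
  · exact ⟨x, by rw [h1, h2]; ext t; simp; tauto⟩
  · exact ⟨y, by rw [h1, h2]; ext t; simp; tauto⟩
  · exact ⟨x, by rw [h1, h2]; ext t; simp; tauto⟩
  · exact absurd (h1.trans h2.symm) huv

lemma twoCount {S : Finset Pt} (hS : S.card = 6) {a b c d : Pt}
    (ha : a ∈ S) (hb : b ∈ S) (hc : c ∈ S) (hd : d ∈ S)
    (hab : a ≠ b) (hac : a ≠ c) (had : a ≠ d) (hbc : b ≠ c) (hbd : b ≠ d) (hcd : c ≠ d)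
    (I1 I2 : Set Pt) (hdisj : ∀ x, x ∈ I1 → x ∉ I2)
    (h1 : a ∉ I1 ∧ b ∉ I1 ∧ c ∉ I1 ∧ d ∉ I1)
    (h2 : a ∉ I2 ∧ b ∉ I2 ∧ c ∉ I2 ∧ d ∉ I2) :
    (S.filter (fun p => p ∈ I1)).card ≤ 1 ∨ (S.filter (fun p => p ∈ I2)).card ≤ 1 := by
  by_contra hcon
  push_neg at hcon
  obtain ⟨hc1, hc2⟩ := hcon
  have hsub : ({a,b,c,d} : Finset Pt) ⊆ S := by
    intro x hx
    simp only [Finset.mem_insert, Finset.mem_singleton] at hx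
    rcases hx with rfl | rfl | rfl | rfl <;> assumption
  have hcard4 : ({a,b,c,d} : Finset Pt).card = 4 := by
    rw [Finset.card_insert_of_notMem (by simp [hab, hac, had]),
      Finset.card_insert_of_notMem (by simp [hbc, hbd]),
      Finset.card_insert_of_notMem (by simp [hcd]), Finset.card_singleton]
  set R := S \ ({a,b,c,d} : Finset Pt) with hR
  have hRcard : R.card = 2 := by
    rw [hR, Finset.card_sdiff_of_subset hsub, hS, hcard4]
  have hsub1 : S.filter (fun p => p ∈ I1) ⊆ R := by
    intro x hx
    rw [Finset.mem_filter] at hx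
    rw [hR, Finset.mem_sdiff]
    refine ⟨hx.1, fun hm => ?_⟩
    simp only [Finset.mem_insert, Finset.mem_singleton] at hm
    rcases hm with rfl | rfl | rfl | rfl
    · exact h1.1 hx.2
    · exact h1.2.1 hx.2
    · exact h1.2.2.1 hx.2
    · exact h1.2.2.2 hx.2
  have hsub2 : S.filter (fun p => p ∈ I2) ⊆ R := by
    intro x hx
    rw [Finset.mem_filter] at hx
    rw [hR, Finset.mem_sdiff]
    refine ⟨hx.1, fun hm => ?_⟩
    simp only [Finset.mem_insert, Finset.mem_singleton] at hm
    rcases hm with rfl | rfl | rfl | rfl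
    · exact h2.1 hx.2
    · exact h2.2.1 hx.2
    · exact h2.2.2.1 hx.2
    · exact h2.2.2.2 hx.2
  have hdisj' : Disjoint (S.filter (fun p => p ∈ I1)) (S.filter (fun p => p ∈ I2)) := by
    rw [Finset.disjoint_left]
    intro x hx1 hx2
    rw [Finset.mem_filter] at hx1 hx2
    exact hdisj x hx1.2 hx2.2
  have hunion : (S.filter (fun p => p ∈ I1)).card + (S.filter (fun p => p ∈ I2)).card
      = ((S.filter (fun p => p ∈ I1)) ∪ (S.filter (fun p => p ∈ I2))).card :=
    (Finset.card_union_of_disjoint hdisj').symm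
  have hle : ((S.filter (fun p => p ∈ I1)) ∪ (S.filter (fun p => p ∈ I2))).card ≤ R.card :=
    Finset.card_le_card (Finset.union_subset hsub1 hsub2)
  omega

lemma not_mem_int_of_coord_neg {a b c : Pt} (h : ¬ Collinear ℝ ({a,b,c} : Set Pt)) {x : Pt}
    {i : Fin 3} (hneg : (triBasis a b c h).coord i x < 0) :
    x ∉ interior (convexHull ℝ ({a,b,c} : Set Pt)) :=
  fun hm => absurd ((mem_int_iff h x).1 hm i) (not_lt.2 hneg.le)

/-- expression of `c` through `a`, `b` and a point `d` whose third coordinate is nonzero -/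
lemma rep_third {a b c d : Pt} (h : ¬ Collinear ℝ ({a,b,c} : Set Pt))
    (hz : (triBasis a b c h).coord 2 d ≠ 0) :
    c = (((triBasis a b c h).coord 2 d)⁻¹ * (-(triBasis a b c h).coord 0 d)) • a
      + (((triBasis a b c h).coord 2 d)⁻¹ * (-(triBasis a b c h).coord 1 d)) • b
      + ((triBasis a b c h).coord 2 d)⁻¹ • d := by
  set x := (triBasis a b c h).coord 0 d
  set y := (triBasis a b c h).coord 1 d
  set z := (triBasis a b c h).coord 2 d
  have hr : x • a + y • b + z • c = d := tri_rep h d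
  have key : z • c = (-x) • a + (-y) • b + d := by
    rw [← hr]; module
  have : z⁻¹ • (z • c) = z⁻¹ • ((-x) • a + (-y) • b + d) := by rw [key]
  rw [smul_smul, inv_mul_cancel₀ hz, one_smul] at this
  rw [this]
  simp only [smul_add, smul_smul]

/-- expression of `a` through `b`, `c` and a point `d` whose first coordinate is nonzero -/
lemma rep_first {a b c d : Pt} (h : ¬ Collinear ℝ ({a,b,c} : Set Pt))
    (hx : (triBasis a b c h).coord 0 d ≠ 0) :
    a = (((triBasis a b c h).coord 0 d)⁻¹ * (-(triBasis a b c h).coord 1 d)) • b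
      + (((triBasis a b c h).coord 0 d)⁻¹ * (-(triBasis a b c h).coord 2 d)) • c
      + ((triBasis a b c h).coord 0 d)⁻¹ • d := by
  set x := (triBasis a b c h).coord 0 d
  set y := (triBasis a b c h).coord 1 d
  set z := (triBasis a b c h).coord 2 d
  have hr : x • a + y • b + z • c = d := tri_rep h d
  have key : x • a = (-y) • b + (-z) • c + d := by
    rw [← hr]; module
  have : x⁻¹ • (x • a) = x⁻¹ • ((-y) • b + (-z) • c + d) := by rw [key]
  rw [smul_smul, inv_mul_cancel₀ hx, one_smul] at this
  rw [this]
  simp only [smul_add, smul_smul]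

def MonoTriangle' {c : ℕ} (S : Finset (ℝ × ℝ)) (χ : ℝ × ℝ → Fin c) (s : ℕ) : Prop :=
  ∃ a ∈ S, ∃ b ∈ S, ∃ d ∈ S, a ≠ b ∧ a ≠ d ∧ b ≠ d ∧
    χ a = χ b ∧ χ b = χ d ∧
      (S.filter (fun p => p ∈ interior (convexHull ℝ ({a, b, d} : Set (ℝ × ℝ))))).card ≤ s

lemma caseNeg {S : Finset Pt} (hS : S.card = 6) (χ : Pt → Fin 2) {a b c d : Pt}
    (ha : a ∈ S) (hb : b ∈ S) (hc : c ∈ S) (hd : d ∈ S)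
    (hab : a ≠ b) (hac : a ≠ c) (had : a ≠ d) (hbc : b ≠ c) (hbd : b ≠ d) (hcd : c ≠ d)
    (hcab : χ a = χ b) (hcac : χ a = χ c) (hcad : χ a = χ d)
    (h : ¬ Collinear ℝ ({a,b,c} : Set Pt)) (h' : ¬ Collinear ℝ ({a,b,d} : Set Pt))
    (hz : (triBasis a b c h).coord 2 d < 0) : MonoTriangle' S χ 1 := by
  set x := (triBasis a b c h).coord 0 d with hx
  set y := (triBasis a b c h).coord 1 d with hy
  set z := (triBasis a b c h).coord 2 d with hzd
  have hz0 : z ≠ 0 := ne_of_lt hz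
  have hsum : x + y + z = 1 := tri_coord_sum h d
  have hrepc := rep_third h hz0
  rw [← hx, ← hy, ← hzd] at hrepc
  have hwsum : z⁻¹ * (-x) + z⁻¹ * (-y) + z⁻¹ = 1 := by
    have e : -x + -y + 1 = z := by linarith
    calc z⁻¹ * (-x) + z⁻¹ * (-y) + z⁻¹ = z⁻¹ * (-x + -y + 1) := by ring
      _ = z⁻¹ * z := by rw [e]
      _ = 1 := inv_mul_cancel₀ hz0
  have hc2 : (triBasis a b d h').coord 2 c = z⁻¹ := by
    have h0 := tri_coord_unique h' hwsum hrepc 2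
    rw [if_neg (by decide : (2:Fin 3) ≠ 0), if_neg (by decide : (2:Fin 3) ≠ 1),
      if_pos rfl] at h0
    rw [h0]; ring
  have hcnot : c ∉ interior (convexHull ℝ ({a,b,d} : Set Pt)) :=
    not_mem_int_of_coord_neg h' (by rw [hc2]; exact inv_lt_zero.2 hz)
  have hdnot : d ∉ interior (convexHull ℝ ({a,b,c} : Set Pt)) :=
    not_mem_int_of_coord_neg h hz
  have hdisj := opp_disj h h' hz
  obtain ⟨va1, va2, va3⟩ := vertex_not_mem_int h
  obtain ⟨vb1, vb2, vb3⟩ := vertex_not_mem_int h'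
  rcases twoCount hS ha hb hc hd hab hac had hbc hbd hcd
      (interior (convexHull ℝ ({a,b,c} : Set Pt)))
      (interior (convexHull ℝ ({a,b,d} : Set Pt)))
      (fun x h1 h2 => hdisj x h2 h1)
      ⟨va1, va2, va3, hdnot⟩ ⟨vb1, vb2, hcnot, vb3⟩ with h1 | h1
  · exact ⟨a, ha, b, hb, c, hc, hab, hac, hbc, hcab, hcab.symm.trans hcac, h1⟩
  · exact ⟨a, ha, b, hb, d, hd, hab, had, hbd, hcab, hcab.symm.trans hcad, h1⟩

lemma caseInt {S : Finset Pt} (hS : S.card = 6) (χ : Pt → Fin 2) {a b c d : Pt}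
    (ha : a ∈ S) (hb : b ∈ S) (hc : c ∈ S) (hd : d ∈ S)
    (hab : a ≠ b) (hac : a ≠ c) (had : a ≠ d) (hbc : b ≠ c) (hbd : b ≠ d) (hcd : c ≠ d)
    (hcab : χ a = χ b) (hcac : χ a = χ c) (hcad : χ a = χ d)
    (h : ¬ Collinear ℝ ({a,b,c} : Set Pt)) (h' : ¬ Collinear ℝ ({a,b,d} : Set Pt))
    (h'' : ¬ Collinear ℝ ({b,c,d} : Set Pt))
    (hpos : ∀ i, 0 < (triBasis a b c h).coord i d) : MonoTriangle' S χ 1 := by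
  set x := (triBasis a b c h).coord 0 d with hx
  set y := (triBasis a b c h).coord 1 d with hy
  set z := (triBasis a b c h).coord 2 d with hzd
  have hx0 : (0:ℝ) < x := hpos 0
  have hy0 : (0:ℝ) < y := hpos 1
  have hz0 : (0:ℝ) < z := hpos 2
  have hsum : x + y + z = 1 := tri_coord_sum h d
  have eq1 : ({b,d,a} : Set Pt) = {a,b,d} := by ext t; simp; tauto
  have eq2 : ({b,d,c} : Set Pt) = {b,c,d} := by ext t; simp; tauto
  have hbda : ¬ Collinear ℝ ({b,d,a} : Set Pt) := by rw [eq1]; exact h'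
  have hbdc : ¬ Collinear ℝ ({b,d,c} : Set Pt) := by rw [eq2]; exact h''
  -- representation of c
  have hrepc := rep_third h (ne_of_gt hz0)
  rw [← hx, ← hy, ← hzd] at hrepc
  have hwsum : z⁻¹ * (-x) + z⁻¹ * (-y) + z⁻¹ = 1 := by
    have e : -x + -y + 1 = z := by linarith
    calc z⁻¹ * (-x) + z⁻¹ * (-y) + z⁻¹ = z⁻¹ * (-x + -y + 1) := by ring
      _ = z⁻¹ * z := by rw [e]
      _ = 1 := inv_mul_cancel₀ (ne_of_gt hz0)
  -- c ∉ int (a,b,d): its first coordinate is negative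
  have hcnot : c ∉ interior (convexHull ℝ ({a,b,d} : Set Pt)) := by
    refine not_mem_int_of_coord_neg h' (i := 0) ?_
    have h0 := tri_coord_unique h' hwsum hrepc 0
    rw [if_pos rfl, if_neg (by decide : (0:Fin 3) ≠ 1),
      if_neg (by decide : (0:Fin 3) ≠ 2)] at h0
    rw [h0]
    have : z⁻¹ > 0 := inv_pos.2 hz0
    nlinarith
  -- a ∉ int (b,c,d): its coordinate at the d-слот... first coordinate negative
  have hrepa := rep_first h (ne_of_gt hx0)
  rw [← hx, ← hy, ← hzd] at hrepa
  have hwsuma : x⁻¹ * (-y) + x⁻¹ * (-z) + x⁻¹ = 1 := by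
    have e : -y + -z + 1 = x := by linarith
    calc x⁻¹ * (-y) + x⁻¹ * (-z) + x⁻¹ = x⁻¹ * (-y + -z + 1) := by ring
      _ = x⁻¹ * x := by rw [e]
      _ = 1 := inv_mul_cancel₀ (ne_of_gt hx0)
  have hanot : a ∉ interior (convexHull ℝ ({b,c,d} : Set Pt)) := by
    refine not_mem_int_of_coord_neg h'' (i := 0) ?_
    have h0 := tri_coord_unique h'' hwsuma hrepa 0
    rw [if_pos rfl, if_neg (by decide : (0:Fin 3) ≠ 1),
      if_neg (by decide : (0:Fin 3) ≠ 2)] at h0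
    rw [h0]
    have : x⁻¹ > 0 := inv_pos.2 hx0
    nlinarith
  -- disjointness of interiors of (a,b,d) and (b,c,d)
  have hrepc' : c = (z⁻¹ * (-y)) • b + z⁻¹ • d + (z⁻¹ * (-x)) • a := by
    rw [hrepc]; abel
  have hwsum' : z⁻¹ * (-y) + z⁻¹ + z⁻¹ * (-x) = 1 := by linarith
  have hz' : (triBasis b d a hbda).coord 2 c < 0 := by
    have h0 := tri_coord_unique hbda hwsum' hrepc' 2
    rw [if_neg (by decide : (2:Fin 3) ≠ 0), if_neg (by decide : (2:Fin 3) ≠ 1),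
      if_pos rfl] at h0
    rw [h0]
    have : z⁻¹ > 0 := inv_pos.2 hz0
    nlinarith
  have hdisj0 := opp_disj hbda hbdc hz'
  have hdisj : ∀ w, w ∈ interior (convexHull ℝ ({a,b,d} : Set Pt)) →
      w ∉ interior (convexHull ℝ ({b,c,d} : Set Pt)) := by
    intro w hw1 hw2
    rw [← eq1] at hw1
    rw [← eq2] at hw2
    exact hdisj0 w hw2 hw1
  obtain ⟨va1, va2, va3⟩ := vertex_not_mem_int h'
  obtain ⟨vb1, vb2, vb3⟩ := vertex_not_mem_int h''
  rcases twoCount hS ha hb hc hd hab hac had hbc hbd hcd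
      (interior (convexHull ℝ ({a,b,d} : Set Pt)))
      (interior (convexHull ℝ ({b,c,d} : Set Pt)))
      hdisj ⟨va1, va2, hcnot, va3⟩ ⟨hanot, vb1, vb2, vb3⟩ with h1 | h1
  · exact ⟨a, ha, b, hb, d, hd, hab, had, hbd, hcab, hcab.symm.trans hcad, h1⟩
  · exact ⟨b, hb, c, hc, d, hd, hbc, hbd, hcd, hcab.symm.trans hcac, hcac.symm.trans hcad, h1⟩

def GenPos' (S : Set Pt) : Prop :=
  ∀ p ∈ S, ∀ q ∈ S, ∀ r ∈ S, p ≠ q → p ≠ r → q ≠ r →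
    ¬ Collinear ℝ ({p, q, r} : Set Pt)

lemma main4 {S : Finset Pt} (hS : S.card = 6) (hgp : GenPos' (S : Set Pt)) (χ : Pt → Fin 2)
    {a b c d : Pt}
    (ha : a ∈ S) (hb : b ∈ S) (hc : c ∈ S) (hd : d ∈ S)
    (hab : a ≠ b) (hac : a ≠ c) (had : a ≠ d) (hbc : b ≠ c) (hbd : b ≠ d) (hcd : c ≠ d)
    (hcab : χ a = χ b) (hcac : χ a = χ c) (hcad : χ a = χ d) : MonoTriangle' S χ 1 := by
  have nc : ∀ {u v w : Pt}, u ∈ S → v ∈ S → w ∈ S → u ≠ v → u ≠ w → v ≠ w →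
      ¬ Collinear ℝ ({u,v,w} : Set Pt) := fun hu hv hw h1 h2 h3 =>
    hgp _ (Finset.mem_coe.2 hu) _ (Finset.mem_coe.2 hv) _ (Finset.mem_coe.2 hw) h1 h2 h3
  have h : ¬ Collinear ℝ ({a,b,c} : Set Pt) := nc ha hb hc hab hac hbc
  set x := (triBasis a b c h).coord 0 d with hxd
  set y := (triBasis a b c h).coord 1 d with hyd
  set z := (triBasis a b c h).coord 2 d with hzd
  have hsum : x + y + z = 1 := tri_coord_sum h d
  have hz0 : z ≠ 0 := fun e => nc ha hb hd hab had hbd (coord_zero_collinear h e)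
  have hx0 : x ≠ 0 := fun e => nc hb hc hd hbc hbd hcd (coord_zero_collinear0 h e)
  have hy0 : y ≠ 0 := fun e => nc ha hc hd hac had hcd (coord_zero_collinear1 h e)
  have hrep : x • a + y • b + z • c = d := tri_rep h d
  rcases lt_trichotomy z 0 with hneg | heq | hposz
  · exact caseNeg hS χ ha hb hc hd hab hac had hbc hbd hcd hcab hcac hcad h
      (nc ha hb hd hab had hbd) hneg
  · exact absurd heq hz0
  rcases lt_trichotomy x 0 with hneg | heq | hposx
  · have hbca : ¬ Collinear ℝ ({b,c,a} : Set Pt) := by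
      rw [show ({b,c,a} : Set Pt) = {a,b,c} by ext t; simp; tauto]; exact h
    have hrep' : d = y • b + z • c + x • a := by rw [← hrep]; abel
    have hsum' : y + z + x = 1 := by linarith
    have hco : (triBasis b c a hbca).coord 2 d = x := by
      have h0 := tri_coord_unique hbca hsum' hrep' 2
      rw [if_neg (by decide : (2:Fin 3) ≠ 0), if_neg (by decide : (2:Fin 3) ≠ 1),
        if_pos rfl] at h0
      rw [h0]; ring
    exact caseNeg hS χ hb hc ha hd hbc hab.symm hbd hac.symm hcd had
      (hcab.symm.trans hcac) hcab.symm (hcab.symm.trans hcad) hbca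
      (nc hb hc hd hbc hbd hcd) (by rw [hco]; exact hneg)
  · exact absurd heq hx0
  rcases lt_trichotomy y 0 with hneg | heq | hposy
  · have hcab' : ¬ Collinear ℝ ({c,a,b} : Set Pt) := by
      rw [show ({c,a,b} : Set Pt) = {a,b,c} by ext t; simp; tauto]; exact h
    have hrep' : d = z • c + x • a + y • b := by rw [← hrep]; abel
    have hsum' : z + x + y = 1 := by linarith
    have hco : (triBasis c a b hcab').coord 2 d = y := by
      have h0 := tri_coord_unique hcab' hsum' hrep' 2
      rw [if_neg (by decide : (2:Fin 3) ≠ 0), if_neg (by decide : (2:Fin 3) ≠ 1),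
        if_pos rfl] at h0
      rw [h0]; ring
    exact caseNeg hS χ hc ha hb hd hac.symm hbc.symm hcd hab had hbd
      hcac.symm (hcac.symm.trans hcab) (hcac.symm.trans hcad) hcab'
      (nc hc ha hd hac.symm hcd had) (by rw [hco]; exact hneg)
  · exact absurd heq hy0
  · refine caseInt hS χ ha hb hc hd hab hac had hbc hbd hcd hcab hcac hcad h
      (nc ha hb hd hab had hbd) (nc hb hc hd hbc hbd hcd) ?_
    intro i
    fin_cases i
    · exact hposx
    · exact hposy
    · exact hposz

lemma main3 {S : Finset Pt} (hS : S.card = 6) (hgp : GenPos' (S : Set Pt)) (χ : Pt → Fin 2)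
    (i : Fin 2) (hA : (S.filter (fun x => χ x = i)).card = 3) : MonoTriangle' S χ 1 := by
  have nc : ∀ {u v w : Pt}, u ∈ S → v ∈ S → w ∈ S → u ≠ v → u ≠ w → v ≠ w →
      ¬ Collinear ℝ ({u,v,w} : Set Pt) := fun hu hv hw h1 h2 h3 =>
    hgp _ (Finset.mem_coe.2 hu) _ (Finset.mem_coe.2 hv) _ (Finset.mem_coe.2 hw) h1 h2 h3
  have fin2' : ∀ (i' s t : Fin 2), s ≠ i' → t ≠ i' → s = t := by decide
  have fin2 : ∀ (s t : Fin 2), s ≠ i → t ≠ i → s = t := fin2' i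
  set A := S.filter (fun x => χ x = i) with hAdef
  obtain ⟨a, b, c, hab, hac, hbc, hAeq⟩ := Finset.card_eq_three.1 hA
  have haA : a ∈ A := by rw [hAeq]; simp
  have hbA : b ∈ A := by rw [hAeq]; simp
  have hcA : c ∈ A := by rw [hAeq]; simp
  have ha : a ∈ S := (Finset.mem_filter.1 haA).1
  have hb : b ∈ S := (Finset.mem_filter.1 hbA).1
  have hc : c ∈ S := (Finset.mem_filter.1 hcA).1
  have hca : χ a = i := (Finset.mem_filter.1 haA).2
  have hcb : χ b = i := (Finset.mem_filter.1 hbA).2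
  have hcc : χ c = i := (Finset.mem_filter.1 hcA).2
  set B := S \ A with hBdef
  have hBcard : B.card = 3 := by
    rw [hBdef, Finset.card_sdiff_of_subset (Finset.filter_subset _ _), hS, hA]
  obtain ⟨p, q, r, hpq, hpr, hqr, hBeq⟩ := Finset.card_eq_three.1 hBcard
  have hpB : p ∈ B := by rw [hBeq]; simp
  have hqB : q ∈ B := by rw [hBeq]; simp
  have hrB : r ∈ B := by rw [hBeq]; simp
  have hp : p ∈ S := (Finset.mem_sdiff.1 hpB).1
  have hq : q ∈ S := (Finset.mem_sdiff.1 hqB).1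
  have hr : r ∈ S := (Finset.mem_sdiff.1 hrB).1
  have hcp : χ p ≠ i := fun e => (Finset.mem_sdiff.1 hpB).2 (Finset.mem_filter.2 ⟨hp, e⟩)
  have hcq : χ q ≠ i := fun e => (Finset.mem_sdiff.1 hqB).2 (Finset.mem_filter.2 ⟨hq, e⟩)
  have hcr : χ r ≠ i := fun e => (Finset.mem_sdiff.1 hrB).2 (Finset.mem_filter.2 ⟨hr, e⟩)
  have hABC : ¬ Collinear ℝ ({a,b,c} : Set Pt) := nc ha hb hc hab hac hbc
  have hPQR : ¬ Collinear ℝ ({p,q,r} : Set Pt) := nc hp hq hr hpq hpr hqr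
  by_cases hk1 : (S.filter (fun w => w ∈ interior (convexHull ℝ ({a,b,c} : Set Pt)))).card ≤ 1
  · exact ⟨a, ha, b, hb, c, hc, hab, hac, hbc, hca.trans hcb.symm, hcb.trans hcc.symm, hk1⟩
  by_cases hk2 : (S.filter (fun w => w ∈ interior (convexHull ℝ ({p,q,r} : Set Pt)))).card ≤ 1
  · exact ⟨p, hp, q, hq, r, hr, hpq, hpr, hqr, fin2 _ _ hcp hcq, fin2 _ _ hcq hcr, hk2⟩
  push_neg at hk1 hk2
  obtain ⟨u, hu, v, hv, huv⟩ := Finset.one_lt_card.1 hk1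
  obtain ⟨s, hs, t, ht, hst⟩ := Finset.one_lt_card.1 hk2
  rw [Finset.mem_filter] at hu hv hs ht
  obtain ⟨huS, huI⟩ := hu
  obtain ⟨hvS, hvI⟩ := hv
  obtain ⟨hsS, hsI⟩ := hs
  obtain ⟨htS, htI⟩ := ht
  obtain ⟨nva, nvb, nvc⟩ := vertex_not_mem_int hABC
  obtain ⟨nvp, nvq, nvr⟩ := vertex_not_mem_int hPQR
  -- u, v belong to {p, q, r}
  have hmemB : ∀ {w : Pt}, w ∈ S → w ∈ interior (convexHull ℝ ({a,b,c} : Set Pt)) →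
      w ∈ ({p,q,r} : Set Pt) := by
    intro w hwS hwI
    have hwA : w ∉ A := by
      rw [hAeq]
      simp only [Finset.mem_insert, Finset.mem_singleton]
      rintro (rfl | rfl | rfl)
      · exact nva hwI
      · exact nvb hwI
      · exact nvc hwI
    have : w ∈ B := Finset.mem_sdiff.2 ⟨hwS, hwA⟩
    rw [hBeq] at this
    simpa using this
  have hmemA : ∀ {w : Pt}, w ∈ S → w ∈ interior (convexHull ℝ ({p,q,r} : Set Pt)) →
      w ∈ ({a,b,c} : Set Pt) := by
    intro w hwS hwI
    have hwB : w ∉ B := by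
      rw [hBeq]
      simp only [Finset.mem_insert, Finset.mem_singleton]
      rintro (rfl | rfl | rfl)
      · exact nvp hwI
      · exact nvq hwI
      · exact nvr hwI
    have hwA : w ∈ A := by
      by_contra hwA
      exact hwB (Finset.mem_sdiff.2 ⟨hwS, hwA⟩)
    rw [hAeq] at hwA
    simpa using hwA
  obtain ⟨w, hw⟩ := third_point (hmemB huS huI) (hmemB hvS hvI) huv
  obtain ⟨w', hw'⟩ := third_point (hmemA hsS hsI) (hmemA htS htI) hst
  have hB' : ¬ Collinear ℝ ({u,v,w} : Set Pt) := by rw [← hw]; exact hPQR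
  have hA' : ¬ Collinear ℝ ({s,t,w'} : Set Pt) := by rw [← hw']; exact hABC
  rw [hw'] at huI hvI
  rw [hw] at hsI htI
  exact (mutual_containment hA' hB' huI hvI hsI htI).elim

lemma worker {S : Finset Pt} (hS : S.card = 6) (hgp : GenPos' (S : Set Pt)) (χ : Pt → Fin 2)
    (i : Fin 2) (h3 : 3 ≤ (S.filter (fun x => χ x = i)).card) : MonoTriangle' S χ 1 := by
  rcases eq_or_lt_of_le h3 with heq | hlt
  · exact main3 hS hgp χ i heq.symm
  · obtain ⟨t, hts, htc⟩ := Finset.exists_subset_card_eq (s := S.filter (fun x => χ x = i)) (n := 4) hlt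
    obtain ⟨a, hat⟩ := Finset.card_pos.1 (by omega : 0 < t.card)
    have herase : (t.erase a).card = 3 := by rw [Finset.card_erase_of_mem hat, htc]
    obtain ⟨b, c, d, hbc, hbd, hcd, heq⟩ := Finset.card_eq_three.1 herase
    have hbe : b ∈ t.erase a := by rw [heq]; simp
    have hce : c ∈ t.erase a := by rw [heq]; simp
    have hde : d ∈ t.erase a := by rw [heq]; simp
    have hab : a ≠ b := (Finset.mem_erase.1 hbe).1.symm
    have hac : a ≠ c := (Finset.mem_erase.1 hce).1.symm
    have had : a ≠ d := (Finset.mem_erase.1 hde).1.symm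
    have hmem : ∀ {x : Pt}, x ∈ t → x ∈ S ∧ χ x = i := fun hx =>
      Finset.mem_filter.1 (hts hx)
    obtain ⟨haS, hca⟩ := hmem hat
    obtain ⟨hbS, hcb⟩ := hmem (Finset.mem_erase.1 hbe).2
    obtain ⟨hcS, hcc⟩ := hmem (Finset.mem_erase.1 hce).2
    obtain ⟨hdS, hcd'⟩ := hmem (Finset.mem_erase.1 hde).2
    exact main4 hS hgp χ haS hbS hcS hdS hab hac had hbc hbd hcd
      (hca.trans hcb.symm) (hca.trans hcc.symm) (hca.trans hcd'.symm)

lemma mono_of_mono' {S : Finset Pt} (χ : Pt → Fin 2) (s : ℕ) :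
    MonoTriangle' S χ s → (∃ a ∈ S, ∃ b ∈ S, ∃ d ∈ S, a ≠ b ∧ a ≠ d ∧ b ≠ d ∧
      χ a = χ b ∧ χ b = χ d ∧
        (S.filter (fun p => p ∈ interior (convexHull ℝ ({a, b, d} : Set Pt)))).card ≤ s) :=
  fun h => h


/-- Every 2-colored set of 6 points in general position contains a monochromatic
triangle with at most 1 interior point. -/
theorem six_points_two_colors (S : Finset (ℝ × ℝ)) (hcard : S.card = 6)
    (hgp : GenPos (S : Set (ℝ × ℝ))) (χ : ℝ × ℝ → Fin 2) :
    MonoTriangle S χ 1 := by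
  have hgp' : GenPos' (S : Set (ℝ × ℝ)) := hgp
  have key : ∀ v : Fin 2, (¬ v = 0) ↔ v = 1 := by decide
  have hsplit := Finset.card_filter_add_card_filter_not (s := S)
    (p := fun x => χ x = 0)
  have heq1 : S.filter (fun x => ¬ χ x = 0) = S.filter (fun x => χ x = 1) :=
    Finset.filter_congr (fun x _ => key (χ x))
  rw [heq1, hcard] at hsplit
  have hor : 3 ≤ (S.filter (fun x => χ x = 0)).card ∨
      3 ≤ (S.filter (fun x => χ x = 1)).card := by omega
  rcases hor with h | h
  · obtain ⟨a, ha, b, hb, d, hd, h1, h2, h3, h4, h5, h6⟩ := worker hcard hgp' χ 0 h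
    exact ⟨a, ha, b, hb, d, hd, h1, h2, h3, h4, h5, h6⟩
  · obtain ⟨a, ha, b, hb, d, hd, h1, h2, h3, h4, h5, h6⟩ := worker hcard hgp' χ 1 h
    exact ⟨a, ha, b, hb, d, hd, h1, h2, h3, h4, h5, h6⟩
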